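/- Let n ≥ 2 and let x₁, x₂, x₃ ∈ ℤ with gcd(xᵢ, n) = 1 for all i ∈ {1, 2, 3}. If (k·x₁)_n + (k·x₂)_n + (k·x₃)_n > n for every integer k ∈ [1, n−1], then xᵢ + xⱼ ≡ 0 (mod n) for some distinct i, j ∈ {1, 2, 3}. -/

import Mathlib

private lemma wrap2 {n d : ℕ} (h0 : 0 < n) (h : d < 2*n) :
    d % n = d ∨ (n ≤ d ∧ d % n + n = d) := by
  rcases Nat.lt_or_ge d n with h1 | h1
  · exact Or.inl (Nat.mod_eq_of_lt h1)
  · refine Or.inr ⟨h1, ?_⟩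
    have h2 : d % n = (d - n) % n := Nat.mod_eq_sub_mod h1
    have h3 : (d - n) % n = d - n := Nat.mod_eq_of_lt (by omega)
    omega

private lemma pin {n v S : ℕ} (hv : v < n) (h1 : n < S) (h2 : S < 2*n) (hmod : S % n = v) :
    S = n + v := by
  rcases wrap2 (show 0 < n by omega) h2 with h | h <;> omega

private lemma coprime_of_mul_mod_one {n a b : ℕ} (h : (a * b) % n = 1) :
    Nat.Coprime a n := by
  have hd2 : Nat.gcd a n ∣ n := Nat.gcd_dvd_right a n
  have hd1 : Nat.gcd a n ∣ a * b := Dvd.dvd.mul_right (Nat.gcd_dvd_left a n) b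
  have h4 : a * b % n + n * (a * b / n) = a * b := Nat.mod_add_div (a*b) n
  have h3 : Nat.gcd a n ∣ a * b % n := by
    have h5 : Nat.gcd a n ∣ n * (a * b / n) := Dvd.dvd.mul_right hd2 _
    have h7 := Nat.dvd_sub hd1 h5
    have h6 : a * b - n * (a * b / n) = a * b % n := by omega
    rwa [h6] at h7
  rw [h] at h3
  exact Nat.dvd_one.mp h3

private lemma coprime_mod {n a : ℕ} (h : Nat.Coprime a n) : Nat.Coprime (a % n) n := by
  have h1 : Nat.gcd n a = Nat.gcd (a % n) n := Nat.gcd_rec n a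
  unfold Nat.Coprime at *
  rw [← h1, Nat.gcd_comm]
  exact h

private lemma modne {n k r : ℕ} (hk1 : 1 ≤ k) (hk2 : k < n) (hc : Nat.Coprime r n) :
    (k * r) % n ≠ 0 := by
  intro h
  have hdvd : n ∣ k * r := Nat.dvd_of_mod_eq_zero h
  have h2 : n ∣ k := Nat.Coprime.dvd_of_dvd_mul_right (Nat.Coprime.symm hc) hdvd
  have := Nat.le_of_dvd (by omega) h2
  omega

private lemma pairsum {n k r : ℕ} (hk1 : 1 ≤ k) (hk2 : k < n) (hc : Nat.Coprime r n) :
    (k * r) % n + ((n - k) * r) % n = n := by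
  have hA := modne hk1 hk2 hc
  have hB := modne (k := n - k) (by omega) (by omega) hc
  have hAlt : (k*r) % n < n := Nat.mod_lt _ (by omega)
  have hBlt : ((n-k)*r) % n < n := Nat.mod_lt _ (by omega)
  have hsum : ((k*r) % n + ((n-k)*r) % n) % n = 0 := by
    have h1 : (k*r) % n + ((n-k)*r) % n ≡ k*r + (n-k)*r [MOD n] :=
      (Nat.mod_modEq (k*r) n).add (Nat.mod_modEq ((n-k)*r) n)
    have h2 : k*r + (n-k)*r = r * n := by
      have h3 : k + (n - k) = n := by omega
      calc k*r + (n-k)*r = (k + (n-k)) * r := by ring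
        _ = n * r := by rw [h3]
        _ = r * n := by ring
    have h1' : ((k*r) % n + ((n-k)*r) % n) % n = (k*r + (n-k)*r) % n := h1
    rw [h1', h2, Nat.mul_mod_left]
  rcases wrap2 (show 0 < n by omega) (show (k*r) % n + ((n-k)*r) % n < 2*n by omega)
    with h | h <;> omega

/-- From the identity at `k` and `k-1`: if `y₂` "jumps" at `k` then `y₃` does not. -/
private lemma jumpstep {n y₁ y₂ y₃ : ℕ} (hn : 0 < n)
    (hy₁ : y₁ < n) (hy₂ : y₂ < n) (hy₃ : y₃ < n)
    (hsum : y₁ + y₂ + y₃ = n + 1)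
    (hid : ∀ k, 1 ≤ k → k ≤ n - 1 → (k*y₁) % n + (k*y₂) % n + (k*y₃) % n = n + k)
    {k : ℕ} (hk2 : 2 ≤ k) (hkn : k ≤ n - 1) (hw : (k*y₂) % n < y₂) :
    y₃ ≤ (k*y₃) % n := by
  have hI1 := hid k (by omega) hkn
  have hI0 := hid (k-1) (by omega) (by omega)
  have key : ∀ y, (k * y) % n = (((k-1)*y) % n + y) % n := by
    intro y
    have h1 : ((k-1)*y) % n + y ≡ (k-1)*y + y [MOD n] :=
      (Nat.mod_modEq ((k-1)*y) n).add_right y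
    have hky : (k-1)*y + y = k*y := by
      have h3 : k - 1 + 1 = k := by omega
      calc (k-1)*y + y = ((k-1)+1)*y := by ring
        _ = k*y := by rw [h3]
    have h1' : (((k-1)*y) % n + y) % n = ((k-1)*y + y) % n := h1
    rw [h1', hky]
  have e₁ := key y₁
  have e₂ := key y₂
  have e₃ := key y₃
  have a₁lt : ((k-1)*y₁) % n < n := Nat.mod_lt _ hn
  have a₂lt : ((k-1)*y₂) % n < n := Nat.mod_lt _ hn
  have a₃lt : ((k-1)*y₃) % n < n := Nat.mod_lt _ hn
  rcases wrap2 hn (show ((k-1)*y₁) % n + y₁ < 2*n by omega) with w₁ | w₁ <;>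
  rcases wrap2 hn (show ((k-1)*y₂) % n + y₂ < 2*n by omega) with w₂ | w₂ <;>
  rcases wrap2 hn (show ((k-1)*y₃) % n + y₃ < 2*n by omega) with w₃ | w₃ <;>
    omega

/-- Core contradiction: all `yᵢ ≥ 2` is impossible (with `y₁ ≤ y₂` and `y₃` the "big" one). -/
private lemma keyB {n y₁ y₂ y₃ : ℕ} (hn2 : 2 ≤ n)
    (h2a : 2 ≤ y₁) (h12 : y₁ ≤ y₂)
    (hy₁ : y₁ < n) (hy₂ : y₂ < n) (hy₃ : y₃ < n)
    (hc₂ : Nat.Coprime y₂ n) (hc₃ : Nat.Coprime y₃ n)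
    (hsum : y₁ + y₂ + y₃ = n + 1) (hbig3 : n < 2*y₃)
    (hid : ∀ k, 1 ≤ k → k ≤ n - 1 → (k*y₁) % n + (k*y₂) % n + (k*y₃) % n = n + k) :
    False := by
  have hy₃1 : 1 ≤ y₃ := by
    rcases Nat.eq_zero_or_pos y₃ with h | h
    · rw [h] at hc₃; rw [Nat.coprime_zero_left] at hc₃; omega
    · exact h
  set m := y₁ + y₂ - 1 with hm
  have hmy₃ : m + y₃ = n := by omega
  have hm3 : 3 ≤ m := by omega
  have h2m : 2*m < n := by omega
  have hcm : Nat.Coprime m n := by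
    have hd2 : Nat.gcd m n ∣ n := Nat.gcd_dvd_right m n
    have hd1 : Nat.gcd m n ∣ m := Nat.gcd_dvd_left m n
    have hd3 : Nat.gcd m n ∣ y₃ := by
      have h7 := Nat.dvd_sub hd2 hd1
      have h6 : n - m = y₃ := by omega
      rwa [h6] at h7
    have hd4 : Nat.gcd m n ∣ Nat.gcd y₃ n := Nat.dvd_gcd hd3 hd2
    rw [hc₃] at hd4
    exact Nat.dvd_one.mp hd4
  obtain ⟨u', hu'⟩ : ∃ u', y₂ * u' % n = 1 :=
    by obtain ⟨m, -, h⟩ := Nat.exists_mul_mod_eq_one_of_coprime hc₂ (by omega); exact ⟨m, h⟩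
  set u := u' % n with hudef
  have hu : y₂ * u % n = 1 := by
    have h1 : y₂ * (u' % n) ≡ y₂ * u' [MOD n] := (Nat.mod_modEq u' n).mul_left y₂
    have h1' : (y₂ * (u' % n)) % n = (y₂ * u') % n := h1
    rw [← hudef] at h1'
    rw [h1', hu']
  have hult : u < n := Nat.mod_lt _ (by omega)
  have hu1 : 1 ≤ u := by
    rcases Nat.eq_zero_or_pos u with h | h
    · rw [h, Nat.mul_zero, Nat.zero_mod] at hu; omega
    · exact h
  have hcu : Nat.Coprime u n := coprime_of_mul_mod_one (n := n) (a := u) (b := y₂)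
    (by rwa [Nat.mul_comm] at hu)
  set σ := (u * m) % n with hσdef
  have hσlt : σ < n := Nat.mod_lt _ (by omega)
  -- the key condition
  have cond : ∀ c, 1 ≤ c → c ≤ y₂ - 1 → (σ * c) % n < m := by
    intro c hc1 hc2'
    set k := (u * c) % n with hkdef
    have hkn : k < n := Nat.mod_lt _ (by omega)
    have hone : (1:ℕ) % n = 1 := Nat.mod_eq_of_lt (by omega)
    have hky₂ : (k * y₂) % n = c := by
      have h1 : k * y₂ ≡ (u*c) * y₂ [MOD n] := (Nat.mod_modEq (u*c) n).mul_right y₂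
      have h1' : (k * y₂) % n = ((u*c)*y₂) % n := h1
      have h2 : (u*c)*y₂ = c * (y₂ * u) := by ring
      have h3 : c * (y₂*u) ≡ c * 1 [MOD n] := by
        apply Nat.ModEq.mul_left c
        show (y₂ * u) % n = 1 % n
        rw [hu, hone]
      have h3' : (c * (y₂*u)) % n = (c * 1) % n := h3
      rw [h1', h2, h3', Nat.mul_one]
      exact Nat.mod_eq_of_lt (by omega)
    have hk0 : 2 ≤ k := by
      rcases Nat.lt_or_ge k 2 with h | h
      · exfalso
        interval_cases k
        · rw [Nat.zero_mul, Nat.zero_mod] at hky₂; omega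
        · rw [Nat.one_mul, Nat.mod_eq_of_lt hy₂] at hky₂; omega
      · exact h
    have hjump : y₃ ≤ (k*y₃) % n :=
      jumpstep (by omega) hy₁ hy₂ hy₃ hsum hid hk0 (by omega) (by rw [hky₂]; omega)
    -- (k*m) % n + (k*y₃) % n = n
    have hpair : (k*m) % n + (k*y₃) % n = n := by
      have hA := modne (n := n) (k := k) (r := m) (by omega) hkn hcm
      have hB := modne (n := n) (k := k) (r := y₃) (by omega) hkn hc₃
      have hAlt : (k*m) % n < n := Nat.mod_lt _ (by omega)
      have hBlt : (k*y₃) % n < n := Nat.mod_lt _ (by omega)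
      have hsum0 : ((k*m) % n + (k*y₃) % n) % n = 0 := by
        have h1 : (k*m) % n + (k*y₃) % n ≡ k*m + k*y₃ [MOD n] :=
          (Nat.mod_modEq (k*m) n).add (Nat.mod_modEq (k*y₃) n)
        have h1' : ((k*m) % n + (k*y₃) % n) % n = (k*m + k*y₃) % n := h1
        have h2 : k*m + k*y₃ = k * n := by
          calc k*m + k*y₃ = k * (m + y₃) := by ring
            _ = k * n := by rw [hmy₃]
        rw [h1', h2, Nat.mul_mod_left]
      rcases wrap2 (show 0 < n by omega)
        (show (k*m) % n + (k*y₃) % n < 2*n by omega) with h | h <;> omega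
    have hle : (k*m) % n < m := by
      have h1 : (k*m) % n ≤ m := by omega
      rcases Nat.lt_or_ge ((k*m) % n) m with h | h
      · exact h
      · exfalso
        have heq : (k*m) % n = m := by omega
        have h2 : k * m ≡ 1 * m [MOD n] := by
          show (k*m) % n = (1*m) % n
          rw [heq, Nat.one_mul, Nat.mod_eq_of_lt (by omega)]
        have h3 : k ≡ 1 [MOD n] := Nat.ModEq.cancel_right_of_coprime
          (by rw [Nat.gcd_comm]; exact hcm) h2
        have h3' : k % n = 1 % n := h3
        rw [Nat.mod_eq_of_lt hkn, Nat.mod_eq_of_lt (by omega)] at h3'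
        omega
    -- rewrite
    have hrw : (k*m) % n = (σ*c) % n := by
      have h1 : k * m ≡ (u*c) * m [MOD n] := (Nat.mod_modEq (u*c) n).mul_right m
      have h2 : σ * c ≡ (u*m) * c [MOD n] := (Nat.mod_modEq (u*m) n).mul_right c
      have h1' : (k*m) % n = ((u*c)*m) % n := h1
      have h2' : (σ*c) % n = ((u*m)*c) % n := h2
      have h3 : (u*c)*m = (u*m)*c := by ring
      rw [h1', h3, ← h2']
    omega
  -- sigma induction
  have base : σ < m := by
    have h := cond 1 le_rfl (by omega)
    rwa [Nat.mul_one, Nat.mod_eq_of_lt hσlt] at h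
  have step : ∀ c, 1 ≤ c → c ≤ y₂ - 1 → σ * c < m := by
    intro c
    induction c with
    | zero => omega
    | succ p ih =>
      intro _ hp1
      rcases Nat.eq_zero_or_pos p with hp | hp
      · subst hp
        simpa using base
      · have ihp : σ * p < m := ih (by omega) (by omega)
        have hexp : σ * (p+1) = σ * p + σ := by ring
        have hlt : σ * (p+1) < n := by omega
        have h := cond (p+1) (by omega) hp1
        rwa [Nat.mod_eq_of_lt hlt] at h
  have hfin : σ * (y₂ - 1) < m := step (y₂ - 1) (by omega) le_rfl
  have hσ2 : σ ≤ 2 := by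
    by_contra hgt
    push_neg at hgt
    have h1 : 3 * (y₂ - 1) ≤ σ * (y₂ - 1) := Nat.mul_le_mul_right _ hgt
    omega
  have hσ0 : σ ≠ 0 := by
    intro h0
    have hdvd : n ∣ u * m := Nat.dvd_of_mod_eq_zero (by rw [← hσdef]; exact h0)
    have h2 : n ∣ m := Nat.Coprime.dvd_of_dvd_mul_left (Nat.Coprime.symm hcu) hdvd
    have := Nat.le_of_dvd (by omega) h2
    omega
  have hone : (1:ℕ) % n = 1 := Nat.mod_eq_of_lt (by omega)
  rcases (show σ = 1 ∨ σ = 2 by omega) with h | h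
  · -- σ = 1 : m ≡ y₂, so y₁ = 1, contradiction
    have h2 : u * m ≡ u * y₂ [MOD n] := by
      show (u*m) % n = (u*y₂) % n
      rw [← hσdef, h, Nat.mul_comm u y₂, hu]
    have h3 : m ≡ y₂ [MOD n] := Nat.ModEq.cancel_left_of_coprime
      (by rw [Nat.gcd_comm]; exact hcu) h2
    have h3' : m % n = y₂ % n := h3
    rw [Nat.mod_eq_of_lt (by omega), Nat.mod_eq_of_lt hy₂] at h3'
    omega
  · -- σ = 2 : m ≡ 2 y₂
    have h2 : u * m ≡ u * (2*y₂) [MOD n] := by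
      show (u*m) % n = (u*(2*y₂)) % n
      have e1 : u * (2*y₂) = 2 * (y₂ * u) := by ring
      have e2 : 2 * (y₂ * u) ≡ 2 * 1 [MOD n] := by
        apply Nat.ModEq.mul_left 2
        show (y₂ * u) % n = 1 % n
        rw [hu, hone]
      have e2' : (2 * (y₂*u)) % n = (2*1) % n := e2
      rw [← hσdef, h, e1, e2']
      have : (2*1) % n = 2 := Nat.mod_eq_of_lt (by omega)
      rw [this]
    have h3 : m ≡ 2*y₂ [MOD n] := Nat.ModEq.cancel_left_of_coprime
      (by rw [Nat.gcd_comm]; exact hcu) h2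
    have h3' : m % n = (2*y₂) % n := h3
    rw [Nat.mod_eq_of_lt (by omega)] at h3'
    rcases wrap2 (show 0 < n by omega) (show 2*y₂ < 2*n by omega) with h4 | h4 <;> omega

private lemma keyA {n y₁ y₂ y₃ : ℕ} (hn : 2 ≤ n)
    (hy₁ : y₁ < n) (hy₂ : y₂ < n) (hy₃ : y₃ < n)
    (hc₁ : Nat.Coprime y₁ n) (hc₂ : Nat.Coprime y₂ n) (hc₃ : Nat.Coprime y₃ n)
    (hsum : y₁ + y₂ + y₃ = n + 1)
    (hid : ∀ k, 1 ≤ k → k ≤ n - 1 → (k*y₁) % n + (k*y₂) % n + (k*y₃) % n = n + k) :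
    y₁ = 1 ∨ y₂ = 1 ∨ y₃ = 1 := by
  by_contra hcon
  push_neg at hcon
  obtain ⟨h1, h2, h3⟩ := hcon
  have hpos : ∀ y : ℕ, Nat.Coprime y n → 1 ≤ y := by
    intro y hc
    rcases Nat.eq_zero_or_pos y with h | h
    · rw [h, Nat.coprime_zero_left] at hc; omega
    · exact h
  have hp₁ := hpos y₁ hc₁
  have hp₂ := hpos y₂ hc₂
  have hp₃ := hpos y₃ hc₃
  have hg₁ : 2 ≤ y₁ := by omega
  have hg₂ : 2 ≤ y₂ := by omega
  have hg₃ : 2 ≤ y₃ := by omega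
  have hn5 : 5 ≤ n := by omega
  -- identity at k = 2 forces exactly one yᵢ with 2 yᵢ > n
  have hI2 := hid 2 (by omega) (by omega)
  have hne : ∀ y : ℕ, 2 ≤ y → Nat.Coprime y n → 2*y ≠ n := by
    intro y hy hc heq
    have hdvd : y ∣ n := ⟨2, by omega⟩
    have : Nat.gcd y n = y := Nat.gcd_eq_left hdvd
    rw [hc] at this
    omega
  have hne₁ := hne y₁ hg₁ hc₁
  have hne₂ := hne y₂ hg₂ hc₂
  have hne₃ := hne y₃ hg₃ hc₃
  have hsplit : (n < 2*y₁ ∧ 2*y₂ < n ∧ 2*y₃ < n) ∨ (n < 2*y₂ ∧ 2*y₁ < n ∧ 2*y₃ < n)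
      ∨ (n < 2*y₃ ∧ 2*y₁ < n ∧ 2*y₂ < n) := by
    rcases wrap2 (show 0 < n by omega) (show 2*y₁ < 2*n by omega) with w₁ | w₁ <;>
    rcases wrap2 (show 0 < n by omega) (show 2*y₂ < 2*n by omega) with w₂ | w₂ <;>
    rcases wrap2 (show 0 < n by omega) (show 2*y₃ < 2*n by omega) with w₃ | w₃ <;>
      omega
  rcases hsplit with ⟨hb, hs₂, hs₃⟩ | ⟨hb, hs₁, hs₃⟩ | ⟨hb, hs₁, hs₂⟩
  · rcases le_total y₂ y₃ with hle | hle
    · exact keyB hn hg₂ hle hy₂ hy₃ hy₁ hc₃ hc₁ (by omega) hb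
        (fun k hk1 hk2 => by have := hid k hk1 hk2; linarith)
    · exact keyB hn hg₃ hle hy₃ hy₂ hy₁ hc₂ hc₁ (by omega) hb
        (fun k hk1 hk2 => by have := hid k hk1 hk2; linarith)
  · rcases le_total y₁ y₃ with hle | hle
    · exact keyB hn hg₁ hle hy₁ hy₃ hy₂ hc₃ hc₂ (by omega) hb
        (fun k hk1 hk2 => by have := hid k hk1 hk2; linarith)
    · exact keyB hn hg₃ hle hy₃ hy₁ hy₂ hc₁ hc₂ (by omega) hb
        (fun k hk1 hk2 => by have := hid k hk1 hk2; linarith)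
  · rcases le_total y₁ y₂ with hle | hle
    · exact keyB hn hg₁ hle hy₁ hy₂ hy₃ hc₂ hc₃ (by omega) hb
        (fun k hk1 hk2 => by have := hid k hk1 hk2; linarith)
    · exact keyB hn hg₂ hle hy₂ hy₁ hy₃ hc₁ hc₃ (by omega) hb
        (fun k hk1 hk2 => by have := hid k hk1 hk2; linarith)

private lemma mainN {n : ℕ} (hn : 2 ≤ n) {r₁ r₂ r₃ : ℕ}
    (h₁ : r₁ < n) (h₂ : r₂ < n) (h₃ : r₃ < n)
    (c₁ : Nat.Coprime r₁ n) (c₂ : Nat.Coprime r₂ n) (c₃ : Nat.Coprime r₃ n)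
    (hbig : ∀ k, 1 ≤ k → k ≤ n - 1 → n < (k*r₁) % n + (k*r₂) % n + (k*r₃) % n) :
    n ∣ (r₁ + r₂) ∨ n ∣ (r₁ + r₃) ∨ n ∣ (r₂ + r₃) := by
  have hupp : ∀ k, 1 ≤ k → k ≤ n - 1 →
      (k*r₁) % n + (k*r₂) % n + (k*r₃) % n < 2*n := by
    intro k hk1 hk2
    have hp₁ := pairsum (n := n) (k := k) hk1 (by omega) c₁
    have hp₂ := pairsum (n := n) (k := k) hk1 (by omega) c₂
    have hp₃ := pairsum (n := n) (k := k) hk1 (by omega) c₃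
    have hb := hbig (n-k) (by omega) (by omega)
    omega
  set s := r₁ + r₂ + r₃ with hs
  have hmods : ∀ k : ℕ, ((k*r₁) % n + (k*r₂) % n + (k*r₃) % n) % n = (k * s) % n := by
    intro k
    have h1 : (k*r₁) % n + (k*r₂) % n + (k*r₃) % n ≡ k*r₁ + k*r₂ + k*r₃ [MOD n] :=
      ((Nat.mod_modEq (k*r₁) n).add (Nat.mod_modEq (k*r₂) n)).add (Nat.mod_modEq (k*r₃) n)
    have h1' : ((k*r₁) % n + (k*r₂) % n + (k*r₃) % n) % n = (k*r₁ + k*r₂ + k*r₃) % n := h1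
    rw [h1']
    congr 1
    rw [hs]; ring
  have hcs : Nat.Coprime s n := by
    by_contra hno
    set g := Nat.gcd s n with hg
    have hd1 : g ∣ n := Nat.gcd_dvd_right s n
    have hd2 : g ∣ s := Nat.gcd_dvd_left s n
    have hd0 : g ≠ 0 := by
      intro h0
      have := Nat.eq_zero_of_gcd_eq_zero_right (hg ▸ h0)
      omega
    have hdge : 2 ≤ g := by
      have hne1 : g ≠ 1 := hno
      omega
    obtain ⟨k, hk⟩ := hd1
    obtain ⟨e, he⟩ := hd2
    have hk2n : 2 * k ≤ n := by
      calc 2 * k ≤ g * k := Nat.mul_le_mul_right k hdge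
        _ = n := hk.symm
    have hk1 : 1 ≤ k := by
      rcases Nat.eq_zero_or_pos k with h | h
      · rw [h, Nat.mul_zero] at hk; omega
      · exact h
    have hdvd : n ∣ k * s := ⟨e, by rw [he, hk]; ring⟩
    have hmod0 : (k * s) % n = 0 := by
      obtain ⟨c, hc⟩ := hdvd
      rw [hc, Nat.mul_mod_right]
    have hb := hbig k hk1 (by omega)
    have hu := hupp k hk1 (by omega)
    have hm := hmods k
    rw [hmod0] at hm
    rcases wrap2 (show 0 < n by omega)
      (show (k*r₁) % n + (k*r₂) % n + (k*r₃) % n < 2*n from hu) with h | h <;> omega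
  obtain ⟨k₀', hk₀'⟩ : ∃ m, s * m % n = 1 :=
    by obtain ⟨m, -, h⟩ := Nat.exists_mul_mod_eq_one_of_coprime hcs (by omega); exact ⟨m, h⟩
  set k₀ := k₀' % n with hk₀def
  have hk₀mul : (k₀ * s) % n = 1 := by
    have h1 : k₀ * s ≡ k₀' * s [MOD n] := (Nat.mod_modEq k₀' n).mul_right s
    have h1' : (k₀ * s) % n = (k₀' * s) % n := h1
    rw [h1', Nat.mul_comm, hk₀']
  have hk₀lt : k₀ < n := Nat.mod_lt _ (by omega)
  have hk₀1 : 1 ≤ k₀ := by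
    rcases Nat.eq_zero_or_pos k₀ with h | h
    · rw [h, Nat.zero_mul, Nat.zero_mod] at hk₀mul; omega
    · exact h
  have hck₀ : Nat.Coprime k₀ n := coprime_of_mul_mod_one hk₀mul
  -- the normalized values
  set y₁ := (k₀ * r₁) % n with hy₁def
  set y₂ := (k₀ * r₂) % n with hy₂def
  set y₃ := (k₀ * r₃) % n with hy₃def
  have hylt₁ : y₁ < n := Nat.mod_lt _ (by omega)
  have hylt₂ : y₂ < n := Nat.mod_lt _ (by omega)
  have hylt₃ : y₃ < n := Nat.mod_lt _ (by omega)
  have hyc₁ : Nat.Coprime y₁ n := coprime_mod (Nat.Coprime.mul hck₀ c₁)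
  have hyc₂ : Nat.Coprime y₂ n := coprime_mod (Nat.Coprime.mul hck₀ c₂)
  have hyc₃ : Nat.Coprime y₃ n := coprime_mod (Nat.Coprime.mul hck₀ c₃)
  have hysum : y₁ + y₂ + y₃ = n + 1 := by
    have hb := hbig k₀ hk₀1 (by omega)
    have hu := hupp k₀ hk₀1 (by omega)
    have hm := hmods k₀
    rw [hk₀mul] at hm
    exact pin (by omega) hb hu hm
  have hyid : ∀ k, 1 ≤ k → k ≤ n - 1 →
      (k*y₁) % n + (k*y₂) % n + (k*y₃) % n = n + k := by
    intro k hk1 hk2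
    set k' := (k * k₀) % n with hk'def
    have hk'lt : k' < n := Nat.mod_lt _ (by omega)
    have hk'1 : 1 ≤ k' := by
      have := modne (n := n) (k := k) (r := k₀) hk1 (by omega) hck₀
      omega
    have he : ∀ r : ℕ, (k * ((k₀ * r) % n)) % n = (k' * r) % n := by
      intro r
      have h1 : k * ((k₀ * r) % n) ≡ k * (k₀ * r) [MOD n] :=
        (Nat.mod_modEq (k₀*r) n).mul_left k
      have h2 : k' * r ≡ (k * k₀) * r [MOD n] := (Nat.mod_modEq (k*k₀) n).mul_right r
      have h1' : (k * ((k₀ * r) % n)) % n = (k * (k₀ * r)) % n := h1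
      have h2' : (k' * r) % n = ((k * k₀) * r) % n := h2
      rw [h1', h2']
      congr 1
      ring
    have hb := hbig k' hk'1 (by omega)
    have hu := hupp k' hk'1 (by omega)
    have hmody : ((k*y₁) % n + (k*y₂) % n + (k*y₃) % n) % n = k := by
      have h1 : (k*y₁) % n + (k*y₂) % n + (k*y₃) % n ≡ k*y₁ + k*y₂ + k*y₃ [MOD n] :=
        ((Nat.mod_modEq (k*y₁) n).add (Nat.mod_modEq (k*y₂) n)).add (Nat.mod_modEq (k*y₃) n)
      have h1' : ((k*y₁) % n + (k*y₂) % n + (k*y₃) % n) % n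
          = (k*y₁ + k*y₂ + k*y₃) % n := h1
      rw [h1']
      have h2 : k*y₁ + k*y₂ + k*y₃ = k * (y₁ + y₂ + y₃) := by ring
      rw [h2, hysum]
      have h3 : k * (n+1) = k + k * n := by ring
      rw [h3, Nat.add_mul_mod_self_right]
      exact Nat.mod_eq_of_lt (by omega)
    rw [hy₁def, hy₂def, hy₃def, he r₁, he r₂, he r₃] at hmody ⊢
    exact pin (by omega) hb hu hmody
  have hfinal := keyA hn hylt₁ hylt₂ hylt₃ hyc₁ hyc₂ hyc₃ hysum hyid
  -- translate back
  have hdvd : ∀ a b : ℕ, a < n → b < n → Nat.Coprime a n → Nat.Coprime b n →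
      (k₀ * a) % n + (k₀ * b) % n = n → n ∣ (a + b) := by
    intro a b ha hb hca hcb hab
    have h1 : (k₀ * a) % n + (k₀ * b) % n ≡ k₀ * a + k₀ * b [MOD n] :=
      (Nat.mod_modEq (k₀*a) n).add (Nat.mod_modEq (k₀*b) n)
    have h1' : ((k₀ * a) % n + (k₀ * b) % n) % n = (k₀*a + k₀*b) % n := h1
    rw [hab, Nat.mod_self] at h1'
    have h2 : k₀*a + k₀*b = k₀ * (a+b) := by ring
    rw [h2] at h1'
    have h3 : n ∣ k₀ * (a+b) := Nat.dvd_of_mod_eq_zero h1'.symm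
    exact Nat.Coprime.dvd_of_dvd_mul_left (Nat.Coprime.symm hck₀) h3
  rcases hfinal with h | h | h
  · -- y₁ = 1 ⇒ y₂ + y₃ = n ⇒ n ∣ r₂ + r₃
    refine Or.inr (Or.inr (hdvd r₂ r₃ h₂ h₃ c₂ c₃ ?_))
    omega
  · refine Or.inr (Or.inl (hdvd r₁ r₃ h₁ h₃ c₁ c₃ ?_))
    omega
  · refine Or.inl (hdvd r₁ r₂ h₁ h₂ c₁ c₂ ?_)
    omega

theorem stmt_12 (n : ℕ) (hn : 2 ≤ n) (x₁ x₂ x₃ : ℤ)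
    (hg₁ : Int.gcd x₁ n = 1) (hg₂ : Int.gcd x₂ n = 1) (hg₃ : Int.gcd x₃ n = 1)
    (hbig : ∀ k : ℕ, 1 ≤ k → k ≤ n - 1 →
      ((k : ℤ) * x₁) % n + ((k : ℤ) * x₂) % n + ((k : ℤ) * x₃) % n > n) :
    (n : ℤ) ∣ (x₁ + x₂) ∨ (n : ℤ) ∣ (x₁ + x₃) ∨ (n : ℤ) ∣ (x₂ + x₃) := by
  have hn0 : (0:ℤ) < (n:ℤ) := by exact_mod_cast (show 0 < n by omega)
  have hnne : (n:ℤ) ≠ 0 := by omega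
  -- residues
  have hsetup : ∀ x : ℤ, Int.gcd x n = 1 →
      ∃ r : ℕ, r < n ∧ (r:ℤ) = x % n ∧ Nat.Coprime r n := by
    intro x hg
    refine ⟨(x % n).toNat, ?_, ?_, ?_⟩
    · have h1 : x % n < n := Int.emod_lt_of_pos x hn0
      have h2 : 0 ≤ x % n := Int.emod_nonneg x hnne
      omega
    · exact Int.toNat_of_nonneg (Int.emod_nonneg x hnne)
    · -- coprimality
      have h2 : 0 ≤ x % n := Int.emod_nonneg x hnne
      set r := (x % n).toNat with hr
      have hrz : (r:ℤ) = x % n := Int.toNat_of_nonneg h2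
      have hd1 : ((Nat.gcd r n : ℕ) : ℤ) ∣ x % n := by
        rw [← hrz]; exact_mod_cast Nat.gcd_dvd_left r n
      have hd2 : ((Nat.gcd r n : ℕ) : ℤ) ∣ (n:ℤ) := by exact_mod_cast Nat.gcd_dvd_right r n
      have hd3 : ((Nat.gcd r n : ℕ) : ℤ) ∣ x := by
        have h4 : x = n * (x / n) + x % n := (Int.mul_ediv_add_emod x n).symm
        rw [h4]
        exact dvd_add (Dvd.dvd.mul_right hd2 _) hd1
      have hd4 : ((Nat.gcd r n : ℕ) : ℤ) ∣ (Int.gcd x n : ℤ) := Int.dvd_coe_gcd hd3 hd2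
      rw [hg] at hd4
      have : Nat.gcd r n ∣ 1 := by exact_mod_cast hd4
      exact Nat.dvd_one.mp this
  obtain ⟨r₁, hr₁lt, hr₁, hc₁⟩ := hsetup x₁ hg₁
  obtain ⟨r₂, hr₂lt, hr₂, hc₂⟩ := hsetup x₂ hg₂
  obtain ⟨r₃, hr₃lt, hr₃, hc₃⟩ := hsetup x₃ hg₃
  have hmodeq : ∀ (x : ℤ) (r : ℕ), r < n → (r:ℤ) = x % n → ∀ k : ℕ,
      ((k:ℤ) * x) % n = (((k * r : ℕ) : ℤ)) % n := by
    intro x r hrlt hr k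
    have h1 : x % (n:ℤ) = (r:ℤ) % n := by
      rw [← hr]
      rw [Int.emod_eq_of_lt (by positivity) (by exact_mod_cast hrlt)]
    have h2 : (k:ℤ) * x ≡ (k:ℤ) * (r:ℤ) [ZMOD (n:ℤ)] := Int.ModEq.mul_left _ h1
    have h2' : ((k:ℤ) * x) % n = ((k:ℤ) * (r:ℤ)) % n := h2
    have h3 : ((k * r : ℕ) : ℤ) = (k:ℤ) * (r:ℤ) := by push_cast; ring
    rw [h3]
    exact h2'
  have hbigN : ∀ k, 1 ≤ k → k ≤ n - 1 →
      n < (k*r₁) % n + (k*r₂) % n + (k*r₃) % n := by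
    intro k hk1 hk2
    have hb := hbig k hk1 hk2
    rw [hmodeq x₁ r₁ hr₁lt hr₁ k, hmodeq x₂ r₂ hr₂lt hr₂ k, hmodeq x₃ r₃ hr₃lt hr₃ k] at hb
    have e : ∀ m : ℕ, (((m : ℕ) : ℤ)) % (n:ℤ) = ((m % n : ℕ) : ℤ) := by
      intro m
      push_cast
      rfl
    rw [e (k*r₁), e (k*r₂), e (k*r₃)] at hb
    exact_mod_cast hb
  have hres := mainN hn hr₁lt hr₂lt hr₃lt hc₁ hc₂ hc₃ hbigN
  have htrans : ∀ (x y : ℤ) (a b : ℕ), (a:ℤ) = x % n → (b:ℤ) = y % n →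
      n ∣ (a + b) → (n:ℤ) ∣ (x + y) := by
    intro x y a b ha hb hdvd
    have h1 : (x + y) % n = ((a:ℤ) + (b:ℤ)) % n := by
      have hx : x ≡ (a:ℤ) [ZMOD (n:ℤ)] := by
        show x % n = (a:ℤ) % n
        rw [ha, Int.emod_emod_of_dvd _ dvd_rfl]
      have hy : y ≡ (b:ℤ) [ZMOD (n:ℤ)] := by
        show y % n = (b:ℤ) % n
        rw [hb, Int.emod_emod_of_dvd _ dvd_rfl]
      exact hx.add hy
    have h2 : ((a:ℤ) + (b:ℤ)) % n = 0 := by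
      have hd : (n:ℤ) ∣ ((a + b : ℕ) : ℤ) := Int.natCast_dvd_natCast.mpr hdvd
      have hd' : (n:ℤ) ∣ ((a:ℤ) + (b:ℤ)) := by push_cast at hd; exact hd
      exact Int.emod_eq_zero_of_dvd hd'
    have h3 : (x + y) % n = 0 := by rw [h1, h2]
    exact Int.dvd_of_emod_eq_zero h3
  rcases hres with h | h | h
  · exact Or.inl (htrans x₁ x₂ r₁ r₂ hr₁ hr₂ h)
  · exact Or.inr (Or.inl (htrans x₁ x₃ r₁ r₃ hr₁ hr₃ h))
  · exact Or.inr (Or.inr (htrans x₂ x₃ r₂ r₃ hr₂ hr₃ h))
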